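/- Let Γ₁ = {(e^{2πix/n}, e^{2πir₁x/n}) : x ∈ ℤ} and Γ₂ = {(e^{2πix/n}, e^{2πir₂x/n}) : x ∈ ℤ} be graph subgroups of SU(2) × SU(2), where r₁, r₂ ∈ (ℤ/n)^×. If Γ₁ and Γ₂ are almost conjugate in SU(2) × SU(2), then r₂ = ±r₁ (mod n), and consequently Γ₁ and Γ₂ are conjugate in SU(2) × SU(2). -/

import Mathlib

open Real

/-- Two subgroups `Γ₁`, `Γ₂` of a group `G` are almost conjugate if there is a bijection
`φ : Γ₁ → Γ₂` such that every `γ ∈ Γ₁` is conjugate in `G` to `φ γ`. -/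
def AlmostConjugate {G : Type*} [Group G] (Γ₁ Γ₂ : Subgroup G) : Prop :=
  ∃ φ : Γ₁ ≃ Γ₂, ∀ γ : Γ₁, IsConj (γ : G) ((φ γ : Γ₂) : G)

/-- The unit quaternion `e^{iθ} = cos θ + i sin θ`, as an element of `SU(2)` realized as
the group of unit quaternions. -/
noncomputable def circQ (θ : ℝ) : unitary (Quaternion ℝ) :=
  ⟨⟨Real.cos θ, Real.sin θ, 0, 0⟩, by
    have h : Quaternion.normSq (⟨Real.cos θ, Real.sin θ, 0, 0⟩ : Quaternion ℝ) = 1 := by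
      erw [Quaternion.normSq_def']
      simp [Real.cos_sq_add_sin_sq θ]
    erw [Unitary.mem_iff, Quaternion.star_mul_self, Quaternion.self_mul_star, h]
    simp⟩

/-- The graph subgroup `Γ_r = {(e^{2πix/n}, e^{2πirx/n}) : x ∈ ℤ}` of `SU(2) × SU(2)`. -/
noncomputable def graphSubgroup (n r : ℕ) : Subgroup (unitary (Quaternion ℝ) × unitary (Quaternion ℝ)) :=
  Subgroup.zpowers (circQ (2 * π / n), circQ (2 * π * r / n))

set_option linter.unnecessarySeqFocus false in
lemma circQ_coe (θ : ℝ) : (circQ θ : Quaternion ℝ) = ⟨Real.cos θ, Real.sin θ, 0, 0⟩ := rfl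

lemma circQ_add (a b : ℝ) : circQ (a + b) = circQ a * circQ b := by
  apply Subtype.ext
  rw [MulMemClass.coe_mul, circQ_coe, circQ_coe, circQ_coe]
  erw [QuaternionAlgebra.mk_mul_mk]
  ext <;> simp [Quaternion.re_mul, Quaternion.imI_mul, Quaternion.imJ_mul, Quaternion.imK_mul,
    Real.cos_add, Real.sin_add] <;> ring

lemma circQ_zero : circQ 0 = 1 := by
  apply Subtype.ext
  rw [circQ_coe]
  ext <;> simp <;> rfl

lemma circQ_zpow (θ : ℝ) (y : ℤ) : circQ θ ^ y = circQ (y * θ) := by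
  induction y using Int.induction_on with
  | zero => simpa using circQ_zero.symm
  | succ k ih =>
    rw [zpow_add_one, ih, ← circQ_add]
    push_cast; ring_nf
  | pred k ih =>
    rw [zpow_sub_one, ih]
    have : circQ ((-↑k - 1) * θ) * circQ θ = circQ (-↑k * θ) := by
      rw [← circQ_add]; push_cast; ring_nf
    rw [mul_inv_eq_iff_eq_mul]
    rw [← circQ_add]
    push_cast
    ring_nf

lemma quat_re_mul_comm (a b : Quaternion ℝ) : (a * b).re = (b * a).re := by
  simp [Quaternion.re_mul]; ring

lemma isConj_re {a b : Quaternion ℝ} (h : IsConj a b) : a.re = b.re := by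
  obtain ⟨u, hu⟩ := h
  have h1 : (u : Quaternion ℝ) * a = b * u := hu
  have : ((u : Quaternion ℝ) * a * (↑u⁻¹ : Quaternion ℝ)).re = b.re := by
    rw [h1, mul_assoc, Units.mul_inv, mul_one]
  rw [← this, quat_re_mul_comm, ← mul_assoc, Units.inv_mul, one_mul]

lemma cos_angles' {n : ℕ} (hn : 0 < n) {a b : ℤ}
    (h : Real.cos ((a : ℝ) * (2 * π / n)) = Real.cos ((b : ℝ) * (2 * π / n))) :
    ((b : ZMod n) = (a : ZMod n) ∨ (b : ZMod n) = -(a : ZMod n)) := by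
  have hπ : (π : ℝ) ≠ 0 := Real.pi_ne_zero
  have hn' : (n : ℝ) ≠ 0 := Nat.cast_ne_zero.mpr hn.ne'
  rw [Real.cos_eq_cos_iff] at h
  obtain ⟨k, hk | hk⟩ := h
  · left
    have hr : (b : ℝ) = k * n + a := by
      have h2 : (b : ℝ) * (2 * π) = ((k * n + a : ℤ) : ℝ) * (2 * π) := by
        field_simp at hk
        push_cast
        linear_combination (2 * π) * hk
      exact_mod_cast mul_right_cancel₀ (by positivity : (2 * π : ℝ) ≠ 0) h2
    have hz : (b : ℤ) = k * n + a := by exact_mod_cast hr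
    rw [hz]; push_cast; simp
  · right
    have hr : (b : ℝ) = k * n - a := by
      have h2 : (b : ℝ) * (2 * π) = ((k * n - a : ℤ) : ℝ) * (2 * π) := by
        field_simp at hk
        push_cast
        linear_combination (2 * π) * hk
      exact_mod_cast mul_right_cancel₀ (by positivity : (2 * π : ℝ) ≠ 0) h2
    have hz : (b : ℤ) = k * n - a := by exact_mod_cast hr
    rw [hz]; push_cast; simp

lemma circQ_period (θ : ℝ) (k : ℤ) : circQ (θ + k * (2 * π)) = circQ θ := by
  apply Subtype.ext
  rw [circQ_coe, circQ_coe]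
  ext <;> simp [Real.cos_add_int_mul_two_pi, Real.sin_add_int_mul_two_pi]

noncomputable def jQ : unitary (Quaternion ℝ) :=
  ⟨⟨0, 0, 1, 0⟩, by
    have h : Quaternion.normSq (⟨0, 0, 1, 0⟩ : Quaternion ℝ) = 1 := by
      erw [Quaternion.normSq_def']; norm_num
    erw [Unitary.mem_iff, Quaternion.star_mul_self, Quaternion.self_mul_star, h]
    simp⟩

lemma jQ_coe : (jQ : Quaternion ℝ) = ⟨0, 0, 1, 0⟩ := rfl

lemma jQ_mul_circQ (θ : ℝ) : jQ * circQ θ = circQ (-θ) * jQ := by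
  apply Subtype.ext
  rw [MulMemClass.coe_mul, MulMemClass.coe_mul, jQ_coe, circQ_coe, circQ_coe]
  erw [QuaternionAlgebra.mk_mul_mk, QuaternionAlgebra.mk_mul_mk]
  ext <;> simp [Quaternion.re_mul, Quaternion.imI_mul, Quaternion.imJ_mul, Quaternion.imK_mul]

lemma jQ_conj (θ : ℝ) : jQ * circQ θ * jQ⁻¹ = circQ (-θ) := by
  rw [jQ_mul_circQ, mul_inv_cancel_right]


/-- Let `Γ₁ = {(e^{2πix/n}, e^{2πir₁x/n})}` and `Γ₂ = {(e^{2πix/n}, e^{2πir₂x/n})}` be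
graph subgroups of `SU(2) × SU(2)` with `r₁, r₂` units mod `n`.  If `Γ₁` and `Γ₂` are
almost conjugate in `SU(2) × SU(2)`, then `r₂ = ± r₁ (mod n)`, and consequently `Γ₁` and
`Γ₂` are conjugate in `SU(2) × SU(2)`. -/
theorem almost_conjugate_graph_subgroups (n r₁ r₂ : ℕ) (hn : 0 < n)
    (h₁ : Nat.Coprime r₁ n) (h₂ : Nat.Coprime r₂ n)
    (h : AlmostConjugate (graphSubgroup n r₁) (graphSubgroup n r₂)) :
    ((r₂ : ZMod n) = (r₁ : ZMod n) ∨ (r₂ : ZMod n) = -(r₁ : ZMod n)) ∧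
    ∃ g : unitary (Quaternion ℝ) × unitary (Quaternion ℝ),
      Subgroup.map (MulAut.conj g).toMonoidHom (graphSubgroup n r₁)
        = graphSubgroup n r₂ := by
  have hn' : (n : ℝ) ≠ 0 := Nat.cast_ne_zero.mpr hn.ne'
  obtain ⟨φ, hφ⟩ := h
  set gen₁ : unitary (Quaternion ℝ) × unitary (Quaternion ℝ) :=
    (circQ (2 * π / n), circQ (2 * π * r₁ / n)) with hgen₁
  set gen₂ : unitary (Quaternion ℝ) × unitary (Quaternion ℝ) :=
    (circQ (2 * π / n), circQ (2 * π * r₂ / n)) with hgen₂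
  have hmem : gen₁ ∈ graphSubgroup n r₁ := Subgroup.mem_zpowers _
  have hc := hφ ⟨gen₁, hmem⟩
  obtain ⟨y, hy⟩ := Subgroup.mem_zpowers_iff.mp (φ ⟨gen₁, hmem⟩).2
  rw [← hy] at hc
  have hpow : gen₂ ^ y = (circQ ((y : ℝ) * (2 * π / n)), circQ ((y : ℝ) * (2 * π * r₂ / n))) := by
    rw [hgen₂]
    show (circQ (2 * π / n) ^ y, circQ (2 * π * r₂ / n) ^ y) = _
    rw [circQ_zpow, circQ_zpow]
  rw [hpow] at hc
  -- extract component conjugacies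
  have hc1 : IsConj ((circQ (2 * π / n) : Quaternion ℝ))
      ((circQ ((y : ℝ) * (2 * π / n)) : Quaternion ℝ)) := by
    have := ((unitary (Quaternion ℝ)).subtype.comp
      (MonoidHom.fst (unitary (Quaternion ℝ)) (unitary (Quaternion ℝ)))).map_isConj hc
    exact this
  have hc2 : IsConj ((circQ (2 * π * r₁ / n) : Quaternion ℝ))
      ((circQ ((y : ℝ) * (2 * π * r₂ / n)) : Quaternion ℝ)) := by
    have := ((unitary (Quaternion ℝ)).subtype.comp
      (MonoidHom.snd (unitary (Quaternion ℝ)) (unitary (Quaternion ℝ)))).map_isConj hc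
    exact this
  have hre1 : Real.cos (((1 : ℤ) : ℝ) * (2 * π / n)) = Real.cos ((y : ℝ) * (2 * π / n)) := by
    have := isConj_re hc1
    simpa [circQ_coe] using this
  have hre2 : Real.cos (((r₁ : ℤ) : ℝ) * (2 * π / n)) = Real.cos (((y * r₂ : ℤ) : ℝ) * (2 * π / n)) := by
    have := isConj_re hc2
    simp only [circQ_coe] at this
    convert this using 2
    · push_cast; ring
    · push_cast; ring
  have hA := cos_angles' hn hre1
  have hB := cos_angles' hn hre2
  push_cast at hA hB
  -- deduce r₂ = ± r₁ in ZMod n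
  have hkey : ((r₂ : ZMod n) = (r₁ : ZMod n) ∨ (r₂ : ZMod n) = -(r₁ : ZMod n)) := by
    rcases hA with hA | hA <;> rcases hB with hB | hB <;> rw [hA] at hB
    · left; linear_combination hB
    · right; linear_combination hB
    · right; linear_combination -hB
    · left; linear_combination -hB
  refine ⟨hkey, ?_⟩
  rcases hkey with hk | hk
  · -- r₂ ≡ r₁ : conjugate by identity
    have hmod := (ZMod.intCast_eq_intCast_iff (r₂ : ℤ) (r₁ : ℤ) n).mp (by push_cast; exact hk)
    obtain ⟨k, hkk⟩ := Int.ModEq.dvd hmod.symm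
    have hr : (r₂ : ℝ) = (r₁ : ℝ) + n * k := by
      have : (r₂ : ℤ) = r₁ + n * k := by linarith
      exact_mod_cast this
    have hang : circQ (2 * π * r₂ / n) = circQ (2 * π * r₁ / n) := by
      have he : (2 * π * r₂ / n : ℝ) = 2 * π * r₁ / n + k * (2 * π) := by
        rw [hr]; field_simp
      rw [he, circQ_period]
    refine ⟨1, ?_⟩
    rw [graphSubgroup, graphSubgroup, MonoidHom.map_zpowers]
    congr 1
    show (1 : _) * gen₁ * (1 : _)⁻¹ = gen₂
    rw [one_mul, inv_one, mul_one, hgen₁, hgen₂, ← hang]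
  · -- r₂ ≡ -r₁ : conjugate by (1, j)
    have hmod := (ZMod.intCast_eq_intCast_iff (r₂ : ℤ) (-(r₁ : ℤ)) n).mp (by push_cast; exact hk)
    obtain ⟨k, hkk⟩ := Int.ModEq.dvd hmod.symm
    have hr : (r₂ : ℝ) = -(r₁ : ℝ) + n * k := by
      have : (r₂ : ℤ) = -(r₁ : ℤ) + n * k := by linarith
      exact_mod_cast this
    have hang : circQ (2 * π * r₂ / n) = circQ (-(2 * π * r₁ / n)) := by
      have he : (2 * π * r₂ / n : ℝ) = -(2 * π * r₁ / n) + k * (2 * π) := by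
        rw [hr]; field_simp
      rw [he, circQ_period]
    refine ⟨((1 : unitary (Quaternion ℝ)), jQ), ?_⟩
    rw [graphSubgroup, graphSubgroup, MonoidHom.map_zpowers]
    congr 1
    show ((1 : unitary (Quaternion ℝ)), jQ) * gen₁ * ((1 : unitary (Quaternion ℝ)), jQ)⁻¹ = gen₂
    rw [hgen₁, hgen₂]
    simp only [Prod.mk_mul_mk, Prod.inv_mk, Prod.mk.injEq]
    constructor
    · group
    · rw [jQ_conj, ← hang]
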